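/- For i = 1, 2, let C_i be a linear code of length n over F_q with dimension k_i, generator matrix G_i, and parity check matrix H_i. Then C_1 ∩ C_2 = {0} if and only if rank(H_1·G_2^T) = k_2. -/

import Mathlib

open Matrix

/-- Euclidean dual of a linear code of length `n`. -/
def dualCode {F : Type*} [Field F] {n : ℕ} (CC : Submodule F (Fin n → F)) :
    Submodule F (Fin n → F) where
  carrier := {v | ∀ c ∈ CC, ∑ i, c i * v i = 0}
  zero_mem' := by intro c hc; simp
  add_mem' := by
    intro a b ha hb c hc
    simp only [Set.mem_setOf_eq] at *
    simp only [Pi.add_apply, mul_add, Finset.sum_add_distrib, ha c hc, hb c hc, add_zero]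
  smul_mem' := by
    intro r v hv c hc
    simp only [Set.mem_setOf_eq] at *
    have h1 : ∀ i, c i * (r • v) i = r * (c i * v i) := by
      intro i; simp only [Pi.smul_apply, smul_eq_mul]; ring
    simp only [h1, ← Finset.mul_sum, hv c hc, mul_zero]

/-- `G` is a generator matrix of the code `CC`: its rows form a basis of `CC`. -/
def IsGenMat (F : Type*) [Field F] {k n : ℕ} (CC : Submodule F (Fin n → F))
    (G : Matrix (Fin k) (Fin n) F) : Prop :=
  LinearIndependent F (fun i => G i) ∧ Submodule.span F (Set.range (fun i => G i)) = CC

/-- For `i = 1,2` let `Cᵢ` be a linear code of length `n` over the finite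
field `F` with dimension `kᵢ`, generator matrix `Gᵢ` and parity check matrix `Hᵢ`.
Then `C₁ ∩ C₂ = {0}` if and only if `rank (H₁ * G₂ᵀ) = k₂`. -/
theorem stmt1 {F : Type*} [Field F] [Fintype F] {n k₁ k₂ : ℕ}
    (C₁ C₂ : Submodule F (Fin n → F))
    (hk₁ : Module.finrank F C₁ = k₁) (hk₂ : Module.finrank F C₂ = k₂)
    (G₁ : Matrix (Fin k₁) (Fin n) F) (G₂ : Matrix (Fin k₂) (Fin n) F)
    (H₁ : Matrix (Fin (n - k₁)) (Fin n) F) (H₂ : Matrix (Fin (n - k₂)) (Fin n) F)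
    (hG₁ : IsGenMat F C₁ G₁) (hG₂ : IsGenMat F C₂ G₂)
    (hH₁ : IsGenMat F (dualCode C₁) H₁) (hH₂ : IsGenMat F (dualCode C₂) H₂) :
    C₁ ⊓ C₂ = ⊥ ↔ (H₁ * G₂.transpose).rank = k₂ := by
  classical
  have hfn : Module.finrank F (Fin n → F) = n := by simp
  -- C₁ is the kernel of H₁
  have hsub : C₁ ≤ LinearMap.ker H₁.mulVecLin := by
    intro v hv
    have hmem : ∀ j, H₁ j ∈ dualCode C₁ := by
      intro j
      rw [← hH₁.2]
      exact Submodule.subset_span ⟨j, rfl⟩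
    have h0 : ∀ j, ∑ i, v i * H₁ j i = 0 := fun j => hmem j v hv
    simp only [LinearMap.mem_ker, Matrix.mulVecLin_apply]
    ext j
    simpa [Matrix.mulVec, dotProduct, mul_comm] using h0 j
  have hH₁rank : H₁.rank = n - k₁ := by
    rw [Matrix.rank_eq_finrank_span_row]
    exact (finrank_span_eq_card hH₁.1).trans (by simp)
  have hk₁n : k₁ ≤ n := by
    have h := Submodule.finrank_le C₁
    rwa [hk₁, hfn] at h
  have hrn : H₁.rank + Module.finrank F (LinearMap.ker H₁.mulVecLin) = n := by
    have h := LinearMap.finrank_range_add_finrank_ker H₁.mulVecLin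
    rw [hfn] at h
    exact h
  have hker : Module.finrank F (LinearMap.ker H₁.mulVecLin) = k₁ := by omega
  have hCeq : C₁ = LinearMap.ker H₁.mulVecLin :=
    Submodule.eq_of_le_of_finrank_eq hsub (by rw [hk₁, hker])
  -- G₂ᵀ as injective map with range C₂
  have hf_inj : Function.Injective G₂ᵀ.mulVecLin := by
    rw [Matrix.mulVecLin_transpose, Matrix.coe_vecMulLinear]
    exact Matrix.vecMul_injective_iff.2 hG₂.1
  have hf_range : LinearMap.range G₂ᵀ.mulVecLin = C₂ := by
    rw [Matrix.mulVecLin_transpose, range_vecMulLinear]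
    exact hG₂.2
  have hcomp : (H₁ * G₂ᵀ).mulVecLin = H₁.mulVecLin ∘ₗ G₂ᵀ.mulVecLin :=
    Matrix.mulVecLin_mul _ _
  have hkercomp : LinearMap.ker (H₁ * G₂ᵀ).mulVecLin = Submodule.comap G₂ᵀ.mulVecLin C₁ := by
    rw [hcomp, LinearMap.ker_comp, ← hCeq]
  have hkerfin : Module.finrank F (LinearMap.ker (H₁ * G₂ᵀ).mulVecLin)
      = Module.finrank F ↥(C₁ ⊓ C₂) := by
    rw [hkercomp]
    have e := Submodule.equivMapOfInjective G₂ᵀ.mulVecLin hf_inj (Submodule.comap G₂ᵀ.mulVecLin C₁)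
    rw [e.finrank_eq, Submodule.map_comap_eq, hf_range, inf_comm]
  have hrk : (H₁ * G₂ᵀ).rank + Module.finrank F ↥(C₁ ⊓ C₂) = k₂ := by
    rw [← hkerfin]
    have := LinearMap.finrank_range_add_finrank_ker (H₁ * G₂ᵀ).mulVecLin
    simpa [Matrix.rank] using this
  have hfd : FiniteDimensional F ↥(C₁ ⊓ C₂) := inferInstance
  constructor
  · intro h
    rw [h] at hrk
    simpa using hrk
  · intro h
    rw [h] at hrk
    have : Module.finrank F ↥(C₁ ⊓ C₂) = 0 := by omega
    exact Submodule.finrank_eq_zero.1 this
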